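/- Let κ be a measurable cardinal and U a normal ultrafilter on κ. If ℬ is a base for U (i.e. ℬ ⊆ U and every A ∈ U almost contains some B ∈ ℬ), then the family of closures {cl(B) : B ∈ ℬ} (closure in the order topology, i.e. B together with its limit points below κ) is a base for the club filter Cub_κ under ⊆*. Consequently 𝔡_κ ≤ ch(U), where ch(U) is the minimum cardinality of a base for U. -/

import Mathlib

open Cardinal Set

namespace PaperFormal

/-- `A` is unbounded in `κ` (as a set of ordinals below `κ`). -/
def UnboundedIn (κ : Ordinal.{0}) (A : Set Ordinal) : Prop :=
  ∀ α < κ, ∃ β ∈ A, α ≤ β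

/-- `A ⊆* B`: almost inclusion (mod bounded) below `κ`. -/
def AlmostSub (κ : Ordinal.{0}) (A B : Set Ordinal) : Prop :=
  ∃ α < κ, ∀ β ∈ A, α ≤ β → β ∈ B

/-- `C` is closed in `κ`. -/
def ClosedIn (κ : Ordinal.{0}) (C : Set Ordinal) : Prop :=
  ∀ α, α < κ → α ≠ 0 → (∀ β < α, (C ∩ Set.Ioo β α).Nonempty) → α ∈ C

/-- `C` is a club (closed unbounded set) in `κ`. -/
def IsClub (κ : Ordinal.{0}) (C : Set Ordinal) : Prop :=
  C ⊆ Set.Iio κ ∧ UnboundedIn κ C ∧ ClosedIn κ C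

/-- `f` maps `κ` into `κ`. -/
def FunOn (κ : Ordinal.{0}) (f : Ordinal → Ordinal) : Prop :=
  ∀ β < κ, f β < κ

/-- almost everywhere domination `f ≤* g` on `κ`. -/
def LeStar (κ : Ordinal.{0}) (f g : Ordinal → Ordinal) : Prop :=
  ∃ α < κ, ∀ β, α ≤ β → β < κ → f β ≤ g β

def UnboundedFunFam (κ : Ordinal.{0}) (𝒜 : Set (Ordinal → Ordinal)) : Prop :=
  (∀ f ∈ 𝒜, FunOn κ f) ∧ ∀ g, FunOn κ g → ∃ f ∈ 𝒜, ¬ LeStar κ f g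

def DominatingFunFam (κ : Ordinal.{0}) (𝒜 : Set (Ordinal → Ordinal)) : Prop :=
  (∀ f ∈ 𝒜, FunOn κ f) ∧ ∀ g, FunOn κ g → ∃ f ∈ 𝒜, LeStar κ g f

/-- the generalized bounding number `𝔟_κ`. -/
noncomputable def bNum (κ : Ordinal.{0}) : Cardinal :=
  sInf { μ : Cardinal.{0} | ∃ 𝒜, UnboundedFunFam κ 𝒜 ∧ #𝒜 = Cardinal.lift.{1} μ }

/-- the generalized dominating number `𝔡_κ`. -/
noncomputable def dNum (κ : Ordinal.{0}) : Cardinal :=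
  sInf { μ : Cardinal.{0} | ∃ 𝒜, DominatingFunFam κ 𝒜 ∧ #𝒜 = Cardinal.lift.{1} μ }

/-- a (proper) filter on `κ`. -/
structure IsKFilter (κ : Ordinal.{0}) (F : Set (Set Ordinal)) : Prop where
  subset : ∀ A ∈ F, A ⊆ Set.Iio κ
  univ_mem : Set.Iio κ ∈ F
  upward : ∀ A ∈ F, ∀ B, B ⊆ Set.Iio κ → A ⊆ B → B ∈ F
  inter : ∀ A ∈ F, ∀ B ∈ F, A ∩ B ∈ F
  proper : ∅ ∉ F

/-- an ultrafilter on `κ`. -/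
structure IsKUltrafilter (κ : Ordinal.{0}) (U : Set (Set Ordinal)) extends IsKFilter κ U : Prop where
  decide : ∀ A, A ⊆ Set.Iio κ → A ∈ U ∨ (Set.Iio κ \ A) ∈ U

/-- uniformity: every member is unbounded (equivalently, for regular `κ`, of size `κ`). -/
def Uniform (κ : Ordinal.{0}) (F : Set (Set Ordinal)) : Prop :=
  ∀ A ∈ F, UnboundedIn κ A

/-- `κ`-completeness. -/
def KComplete (κ : Ordinal.{0}) (F : Set (Set Ordinal)) : Prop :=
  ∀ s : Set (Set Ordinal), s ⊆ F → s.Nonempty → #s < Cardinal.lift.{1} κ.card → ⋂₀ s ∈ F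

/-- closure under diagonal intersections. -/
def DiagClosed (κ : Ordinal.{0}) (F : Set (Set Ordinal)) : Prop :=
  ∀ A : Ordinal → Set Ordinal, (∀ i < κ, A i ∈ F) →
    {β | β < κ ∧ ∀ i < β, β ∈ A i} ∈ F

/-- a normal ultrafilter on `κ`: `κ`-complete, contains all clubs, closed under
diagonal intersections. -/
def NormalUF (κ : Ordinal.{0}) (U : Set (Set Ordinal)) : Prop :=
  IsKUltrafilter κ U ∧ Uniform κ U ∧ KComplete κ U ∧
    (∀ C, IsClub κ C → C ∈ U) ∧ DiagClosed κ U

/-- `ℬ` is a `⊆*`-base for `F`. -/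
def IsBase (κ : Ordinal.{0}) (F ℬ : Set (Set Ordinal)) : Prop :=
  ℬ ⊆ F ∧ ∀ A ∈ F, ∃ B ∈ ℬ, AlmostSub κ B A

/-- the character of a filter. -/
noncomputable def chNum (κ : Ordinal.{0}) (F : Set (Set Ordinal)) : Cardinal :=
  sInf { μ : Cardinal.{0} | ∃ ℬ, IsBase κ F ℬ ∧ #ℬ = Cardinal.lift.{1} μ }

/-- there is a `⊆*`-decreasing `λ`-sequence in `F` with no `⊆*`-lower bound in `F`. -/
def HasTower (κ : Ordinal.{0}) (F : Set (Set Ordinal)) (lam : Cardinal) : Prop :=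
  ∃ S : Ordinal → Set Ordinal, (∀ i < lam.ord, S i ∈ F) ∧
    (∀ i j, i < j → j < lam.ord → AlmostSub κ (S j) (S i)) ∧
    ¬ ∃ Y ∈ F, ∀ i < lam.ord, AlmostSub κ Y (S i)

/-- the depth `𝔱(F)` of a filter. -/
noncomputable def tNum (κ : Ordinal.{0}) (F : Set (Set Ordinal)) : Cardinal :=
  sInf { μ : Cardinal.{0} | μ.IsRegular ∧ HasTower κ F μ }

/-- the ultrafilter number `𝔲_κ`. -/
noncomputable def uNum (κ : Ordinal.{0}) : Cardinal :=
  sInf { μ : Cardinal.{0} | ∃ U, IsKUltrafilter κ U ∧ Uniform κ U ∧ chNum κ U = μ }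

/-- the complete ultrafilter number `𝔲^com_κ`. -/
noncomputable def uComNum (κ : Ordinal.{0}) : Cardinal :=
  sInf { μ : Cardinal.{0} | ∃ U, IsKUltrafilter κ U ∧ Uniform κ U ∧ KComplete κ U ∧ chNum κ U = μ }

/-- `U` is a simple `P_λ`-point: a uniform ultrafilter with a `⊆*`-decreasing
generating sequence of length `λ`. -/
def SimplePPoint (κ : Ordinal.{0}) (lam : Cardinal) (U : Set (Set Ordinal)) : Prop :=
  IsKUltrafilter κ U ∧ Uniform κ U ∧
    ∃ S : Ordinal → Set Ordinal, (∀ i < lam.ord, S i ∈ U) ∧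
      (∀ i j, i < j → j < lam.ord → AlmostSub κ (S j) (S i)) ∧
      ∀ A ∈ U, ∃ i < lam.ord, AlmostSub κ (S i) A

/-- a `⊆*`-decreasing generating sequence of length `λ` for a filter `F`. -/
def SimplePFilter (κ : Ordinal.{0}) (lam : Cardinal) (F : Set (Set Ordinal)) : Prop :=
  ∃ S : Ordinal → Set Ordinal, (∀ i < lam.ord, S i ∈ F) ∧
    (∀ i j, i < j → j < lam.ord → AlmostSub κ (S j) (S i)) ∧
    ∀ A ∈ F, ∃ i < lam.ord, AlmostSub κ (S i) A

/-- `ℬ` is a `π`-base for `U`: unbounded sets, almost contained in members of `U`. -/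
def IsPiBase (κ : Ordinal.{0}) (U ℬ : Set (Set Ordinal)) : Prop :=
  (∀ B ∈ ℬ, B ⊆ Set.Iio κ ∧ UnboundedIn κ B) ∧ ∀ A ∈ U, ∃ B ∈ ℬ, AlmostSub κ B A

/-- the `π`-character `πch(U)`. -/
noncomputable def piChNum (κ : Ordinal.{0}) (U : Set (Set Ordinal)) : Cardinal :=
  sInf { μ : Cardinal.{0} | ∃ ℬ, IsPiBase κ U ℬ ∧ #ℬ = Cardinal.lift.{1} μ }

/-- `Y` is a pseudo-intersection of the family `𝒜`. -/
def IsPseudoInter (κ : Ordinal.{0}) (𝒜 : Set (Set Ordinal)) (Y : Set Ordinal) : Prop :=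
  Y ⊆ Set.Iio κ ∧ UnboundedIn κ Y ∧ ∀ A ∈ 𝒜, AlmostSub κ Y A

/-- `π𝔭(U)`: the least size of a subfamily of `U` with no pseudo-intersection. -/
noncomputable def piPNum (κ : Ordinal.{0}) (U : Set (Set Ordinal)) : Cardinal :=
  sInf { μ : Cardinal.{0} | ∃ 𝒜, 𝒜 ⊆ U ∧ #𝒜 = Cardinal.lift.{1} μ ∧ ¬ ∃ Y, IsPseudoInter κ 𝒜 Y }

/-- a `⊆*`-decreasing `λ`-sequence in `U` unbounded in `([κ]^κ, ⊇*)`. -/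
def HasPiTower (κ : Ordinal.{0}) (U : Set (Set Ordinal)) (lam : Cardinal) : Prop :=
  ∃ S : Ordinal → Set Ordinal, (∀ i < lam.ord, S i ∈ U) ∧
    (∀ i j, i < j → j < lam.ord → AlmostSub κ (S j) (S i)) ∧
    ¬ ∃ Y, Y ⊆ Set.Iio κ ∧ UnboundedIn κ Y ∧ ∀ i < lam.ord, AlmostSub κ Y (S i)

/-- `π𝔱(U)`. -/
noncomputable def piTNum (κ : Ordinal.{0}) (U : Set (Set Ordinal)) : Cardinal :=
  sInf { μ : Cardinal.{0} | μ.IsRegular ∧ HasPiTower κ U μ }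

/-- `A` splits `B`. -/
def Splits (κ : Ordinal.{0}) (A B : Set Ordinal) : Prop :=
  UnboundedIn κ (B ∩ A) ∧ UnboundedIn κ (B \ A)

/-- the splitting number `𝔰_κ`. -/
noncomputable def sNum (κ : Ordinal.{0}) : Cardinal :=
  sInf { μ : Cardinal.{0} | ∃ 𝒜 : Set (Set Ordinal), (∀ A ∈ 𝒜, A ⊆ Set.Iio κ) ∧
    (∀ X, X ⊆ Set.Iio κ → UnboundedIn κ X → ∃ A ∈ 𝒜, Splits κ A X) ∧ #𝒜 = Cardinal.lift.{1} μ }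

/-- the reaping number `𝔯_κ`. -/
noncomputable def rNum (κ : Ordinal.{0}) : Cardinal :=
  sInf { μ : Cardinal.{0} | ∃ 𝒜 : Set (Set Ordinal), (∀ A ∈ 𝒜, A ⊆ Set.Iio κ ∧ UnboundedIn κ A) ∧
    (¬ ∃ X, X ⊆ Set.Iio κ ∧ ∀ A ∈ 𝒜, Splits κ X A) ∧ #𝒜 = Cardinal.lift.{1} μ }

/-- `f` is almost one-to-one modulo `U`: bounded-to-one on a set in `U`. -/
def AlmostInjMod (κ : Ordinal.{0}) (U : Set (Set Ordinal)) (f : Ordinal → Ordinal) : Prop :=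
  ∃ X ∈ U, ∀ γ < κ, ∃ α < κ, ∀ β ∈ X, f β = γ → β < α

/-- the pushforward `f_*(U)`. -/
def PushFwd (κ : Ordinal.{0}) (f : Ordinal → Ordinal) (U : Set (Set Ordinal)) :
    Set (Set Ordinal) :=
  { A | A ⊆ Set.Iio κ ∧ (Set.Iio κ ∩ f ⁻¹' A) ∈ U }

/-- countable completeness. -/
def CountablyComplete (U : Set (Set Ordinal)) : Prop :=
  ∀ s : Set (Set Ordinal), s ⊆ U → s.Countable → s.Nonempty → ⋂₀ s ∈ U


/-- the closure of `B` in the order topology below `κ`: `B` together with its limit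
points below `κ`. -/
def ClIn (κ : Ordinal.{0}) (B : Set Ordinal) : Set Ordinal :=
  { γ | γ < κ ∧ (γ ∈ B ∨ (γ ≠ 0 ∧ ∀ β < γ, (B ∩ Set.Ioo β γ).Nonempty)) }

/-- `𝔡_κ` as the least size of a family of clubs cofinal in `(Cub_κ, ⊇*)`. -/
noncomputable def dClubNum (κ : Ordinal.{0}) : Cardinal :=
  sInf { μ : Cardinal.{0} | ∃ 𝒜 : Set (Set Ordinal), (∀ A ∈ 𝒜, IsClub κ A) ∧
    (∀ C, IsClub κ C → ∃ A ∈ 𝒜, AlmostSub κ A C) ∧ #𝒜 = Cardinal.lift.{1} μ }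

/-- if `U` is a normal ultrafilter on a measurable `κ` and `ℬ` is a base
for `U`, then the closures of members of `ℬ` form a base for the club filter under
`⊆*`; consequently `𝔡_κ ≤ ch(U)`. -/
theorem clIn_club (κ : Ordinal.{0}) (B : Set Ordinal) (hsub : B ⊆ Set.Iio κ)
    (hunb : UnboundedIn κ B) : IsClub κ (ClIn κ B) := by
  refine ⟨fun γ hγ => hγ.1, ?_, ?_⟩
  · intro α hα
    obtain ⟨β, hβB, hβ⟩ := hunb α hα
    exact ⟨β, ⟨hsub hβB, Or.inl hβB⟩, hβ⟩
  · intro α hα hα0 hcl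
    refine ⟨hα, Or.inr ⟨hα0, fun β hβ => ?_⟩⟩
    obtain ⟨γ, ⟨hγκ, hγ⟩, hγβ, hγα⟩ := hcl β hβ
    rcases hγ with hγB | ⟨hγ0, hlim⟩
    · exact ⟨γ, hγB, hγβ, hγα⟩
    · obtain ⟨x, hxB, hxβ, hxγ⟩ := hlim β hγβ
      exact ⟨x, hxB, hxβ, hxγ.trans hγα⟩

theorem base_claim (κ : Cardinal.{0}) (hreg : κ.IsRegular)
    (U ℬ' : Set (Set Ordinal)) (hU : NormalUF κ.ord U) (hB : IsBase κ.ord U ℬ') :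
    ∀ C, IsClub κ.ord C → ∃ B ∈ ℬ', AlmostSub κ.ord (ClIn κ.ord B) C := by
  intro C hC
  obtain ⟨B, hBmem, α, hα, hBC⟩ := hB.2 C (hU.2.2.2.1 C hC)
  have hsucc : α + 1 < κ.ord := by
    rw [Ordinal.add_one_eq_succ]
    exact (Cardinal.isSuccLimit_ord hreg.aleph0_le).succ_lt hα
  refine ⟨B, hBmem, α + 1, hsucc, ?_⟩
  rintro γ ⟨hγκ, hγ⟩ hαγ
  have hαltγ : α < γ := lt_of_lt_of_le (by rw [Ordinal.add_one_eq_succ]; exact Order.lt_succ α) hαγ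
  rcases hγ with hγB | ⟨hγ0, hlim⟩
  · exact hBC γ hγB hαltγ.le
  · refine hC.2.2 γ hγκ hγ0 (fun β hβ => ?_)
    obtain ⟨x, hxB, hx1, hx2⟩ := hlim (max β α) (max_lt hβ hαltγ)
    exact ⟨x, hBC x hxB (le_of_lt (lt_of_le_of_lt (le_max_right β α) hx1)),
      lt_of_le_of_lt (le_max_left β α) hx1, hx2⟩

theorem card_small (κ : Ordinal.{0}) (ℬ' : Set (Set Ordinal))
    (h : ∀ B ∈ ℬ', B ⊆ Set.Iio κ) : ∃ μ : Cardinal.{0}, #ℬ' = Cardinal.lift.{1} μ := by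
  have hinj : Function.Injective
      (fun B : ℬ' => (Subtype.val ⁻¹' (B : Set Ordinal) : Set (Set.Iio κ))) := by
    intro B₁ B₂ he
    have he' : (Subtype.val ⁻¹' (B₁ : Set Ordinal) : Set (Set.Iio κ))
        = Subtype.val ⁻¹' (B₂ : Set Ordinal) := he
    apply Subtype.ext
    ext x
    constructor
    · intro hx
      have hx' : (⟨x, h _ B₁.2 hx⟩ : Set.Iio κ) ∈ Subtype.val ⁻¹' (B₁ : Set Ordinal) := hx
      rw [he'] at hx'
      exact hx'
    · intro hx
      have hx' : (⟨x, h _ B₂.2 hx⟩ : Set.Iio κ) ∈ Subtype.val ⁻¹' (B₂ : Set Ordinal) := hx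
      rw [← he'] at hx'
      exact hx'
  have hle : #ℬ' ≤ Cardinal.lift.{1} (2 ^ κ.card) := by
    calc #ℬ' ≤ #(Set (Set.Iio κ)) := Cardinal.mk_le_of_injective hinj
    _ = 2 ^ #(Set.Iio κ) := Cardinal.mk_set
    _ = 2 ^ Cardinal.lift.{1} κ.card := by rw [Ordinal.mk_Iio_ordinal]
    _ = Cardinal.lift.{1} (2 ^ κ.card) := by rw [Cardinal.lift_two_power]
  obtain ⟨μ, hμ⟩ := Cardinal.mem_range_lift_of_le hle
  exact ⟨μ, hμ.symm⟩

theorem stmt4 (κ : Cardinal.{0}) (hreg : κ.IsRegular) (hunc : Cardinal.aleph0 < κ)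
    (U : Set (Set Ordinal)) (hU : NormalUF κ.ord U)
    (ℬ : Set (Set Ordinal)) (hB : IsBase κ.ord U ℬ) :
    (∀ C, IsClub κ.ord C → ∃ B ∈ ℬ, AlmostSub κ.ord (ClIn κ.ord B) C) ∧
    dClubNum κ.ord ≤ chNum κ.ord U := by
  constructor
  · exact base_claim κ hreg U ℬ hU hB
  · -- the chNum set is nonempty
    have hset : { μ : Cardinal.{0} | ∃ ℬ', IsBase κ.ord U ℬ' ∧ #ℬ' = Cardinal.lift.{1} μ }.Nonempty := by
      obtain ⟨μ, hμ⟩ := card_small κ.ord ℬ (fun B hBm => hU.1.subset B (hB.1 hBm))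
      exact ⟨μ, ℬ, hB, hμ⟩
    have hmem := csInf_mem hset
    obtain ⟨ℬ', hB', hcard⟩ := hmem
    -- build the dominating family of clubs
    set 𝒜 := ClIn κ.ord '' ℬ' with h𝒜
    have hclub : ∀ A ∈ 𝒜, IsClub κ.ord A := by
      rintro A ⟨B, hBm, rfl⟩
      exact clIn_club κ.ord B (hU.1.subset B (hB'.1 hBm)) (hU.2.1 B (hB'.1 hBm))
    have hdom : ∀ C, IsClub κ.ord C → ∃ A ∈ 𝒜, AlmostSub κ.ord A C := by
      intro C hC
      obtain ⟨B, hBm, hAS⟩ := base_claim κ hreg U ℬ' hU hB' C hC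
      exact ⟨ClIn κ.ord B, ⟨B, hBm, rfl⟩, hAS⟩
    have hcardA : #𝒜 ≤ Cardinal.lift.{1} (chNum κ.ord U) := by
      unfold chNum
      rw [← hcard]
      exact Cardinal.mk_image_le
    obtain ⟨ν, hν⟩ := Cardinal.mem_range_lift_of_le hcardA
    have hνd : dClubNum κ.ord ≤ ν := csInf_le' ⟨𝒜, hclub, hdom, hν.symm⟩
    have hνch : ν ≤ chNum κ.ord U := by
      rw [← Cardinal.lift_le.{1}, hν]
      exact hcardA
    exact hνd.trans hνch

end PaperFormal
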